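/- arXiv:2412.20591 — 2 statements merged into one kernel-verified Lean document; each statement's English description precedes it below -/
import Mathlib

section
/- For every natural number m ≥ 1, s(m) = ((−1)^m · 6^{m+1} / 2) · b(m+1). -/
/-- The large Schröder numbers: `s 0 = 1` and
`s k = s (k-1) + ∑_{i=0}^{k-1} s i * s (k-1-i)` for `k ≥ 1`. -/
def s : ℕ → ℕ
  | 0 => 1
  | k + 1 =>
      s k + ∑ i ∈ (Finset.range (k + 1)).attach, s i.1 * s (k - i.1)
decreasing_by
  all_goals first
    | omega
    | (have := Finset.mem_range.mp i.2; omega)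

/-- The generalized binomial coefficient `binom(x, n) = (∏_{i=0}^{n-1} (x - i)) / n!`. -/
noncomputable def gbinom (x : ℝ) (n : ℕ) : ℝ :=
  (∏ i ∈ Finset.range n, (x - i)) / n.factorial

/-- `b m = ∑_{k=0}^{m} binom(1/2, m-k) ⬝ binom(m-k, k) ⬝ 36^(-k)`. -/
noncomputable def b (m : ℕ) : ℝ :=
  ∑ k ∈ Finset.range (m + 1),
    gbinom (1 / 2) (m - k) * ((m - k).choose k : ℝ) * (1 / 36 : ℝ) ^ k

/-! ### Auxiliary lemmas -/

noncomputable def gg (n k : ℕ) : ℝ := gbinom (1/2) n * (n.choose k : ℝ) * (1/36:ℝ)^k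

lemma descPochhammer_real_eval (x : ℝ) (n : ℕ) :
    (descPochhammer ℝ n).eval x = ∏ i ∈ Finset.range n, (x - i) := by
  induction n with
  | zero => simp
  | succ n ih => rw [descPochhammer_succ_eval, ih, Finset.prod_range_succ]

lemma gbinom_eq_choose (x : ℝ) (n : ℕ) : gbinom x n = Ring.choose x n := by
  have h := Ring.descPochhammer_eq_factorial_smul_choose x n
  have h2 : (descPochhammer ℤ n).smeval x = (descPochhammer ℝ n).eval x := by
    rw [← Polynomial.aeval_eq_smeval, ← descPochhammer_map (algebraMap ℤ ℝ),
      Polynomial.aeval_def, Polynomial.eval_map]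
  rw [gbinom, ← descPochhammer_real_eval, ← h2, h, nsmul_eq_mul, mul_comm, mul_div_assoc,
    div_self (by exact_mod_cast Nat.factorial_ne_zero n), mul_one]

lemma aa (k : ℕ) : ∑ ij ∈ Finset.HasAntidiagonal.antidiagonal k,
    gbinom (1/2) ij.1 * gbinom (1/2) ij.2 = (Nat.choose 1 k : ℝ) := by
  simp_rw [gbinom_eq_choose]
  rw [← Ring.add_choose_eq k (Commute.all _ _)]
  norm_num
  rw [show (1:ℝ) = ((1:ℕ):ℝ) by norm_num, Ring.choose_natCast]

lemma b_eq_antidiagonal (m : ℕ) :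
    b m = ∑ p ∈ Finset.HasAntidiagonal.antidiagonal m, gg p.1 p.2 := by
  rw [Finset.Nat.sum_antidiagonal_eq_sum_range_succ_mk, b, ← Finset.sum_range_reflect]
  apply Finset.sum_congr rfl
  intro j hj
  have hj' : j ≤ m := Nat.lt_succ_iff.mp (Finset.mem_range.mp hj)
  have h1 : m + 1 - 1 - j = m - j := by omega
  have h2 : m - (m - j) = j := by omega
  rw [h1, h2, gg]

lemma bb (M : ℕ) :
    ∑ p ∈ Finset.HasAntidiagonal.antidiagonal M, b p.1 * b p.2
      = ∑ q ∈ Finset.HasAntidiagonal.antidiagonal M,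
          (Nat.choose 1 q.1 : ℝ) * (q.1.choose q.2 : ℝ) * (1/36:ℝ) ^ q.2 := by
  have step1 : ∑ p ∈ Finset.HasAntidiagonal.antidiagonal M, b p.1 * b p.2
      = ∑ x ∈ (Finset.HasAntidiagonal.antidiagonal M).sigma
          (fun q : ℕ × ℕ => Finset.HasAntidiagonal.antidiagonal q.1 ×ˢ Finset.HasAntidiagonal.antidiagonal q.2),
          gg x.2.1.1 x.2.1.2 * gg x.2.2.1 x.2.2.2 := by
    rw [Finset.sum_sigma]
    apply Finset.sum_congr rfl
    intro p _
    rw [b_eq_antidiagonal, b_eq_antidiagonal, Finset.sum_mul_sum]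
    dsimp only
    rw [Finset.sum_product]
  have step2 : ∑ x ∈ (Finset.HasAntidiagonal.antidiagonal M).sigma
          (fun q : ℕ × ℕ => Finset.HasAntidiagonal.antidiagonal q.1 ×ˢ Finset.HasAntidiagonal.antidiagonal q.2),
          gg x.2.1.1 x.2.1.2 * gg x.2.2.1 x.2.2.2
      = ∑ x ∈ (Finset.HasAntidiagonal.antidiagonal M).sigma
          (fun q : ℕ × ℕ => Finset.HasAntidiagonal.antidiagonal q.1 ×ˢ Finset.HasAntidiagonal.antidiagonal q.2),
          gg x.2.1.1 x.2.2.1 * gg x.2.1.2 x.2.2.2 := by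
    apply Finset.sum_nbij'
      (i := fun x => ⟨(x.2.1.1 + x.2.2.1, x.2.1.2 + x.2.2.2),
        ((x.2.1.1, x.2.2.1), (x.2.1.2, x.2.2.2))⟩)
      (j := fun x => ⟨(x.2.1.1 + x.2.2.1, x.2.1.2 + x.2.2.2),
        ((x.2.1.1, x.2.2.1), (x.2.1.2, x.2.2.2))⟩)
    · rintro ⟨⟨p1, p2⟩, ⟨n1, k1⟩, ⟨n2, k2⟩⟩ hx
      simp only [Finset.mem_sigma, Finset.mem_product, Finset.HasAntidiagonal.mem_antidiagonal] at hx ⊢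
      refine ⟨by omega, by simp, by simp⟩
    · rintro ⟨⟨p1, p2⟩, ⟨n1, k1⟩, ⟨n2, k2⟩⟩ hx
      simp only [Finset.mem_sigma, Finset.mem_product, Finset.HasAntidiagonal.mem_antidiagonal] at hx ⊢
      refine ⟨by omega, by simp, by simp⟩
    · rintro ⟨⟨p1, p2⟩, ⟨n1, k1⟩, ⟨n2, k2⟩⟩ hx
      simp only [Finset.mem_sigma, Finset.mem_product, Finset.HasAntidiagonal.mem_antidiagonal] at hx
      obtain ⟨h1, h2, h3⟩ := hx
      subst h2; subst h3; rfl
    · rintro ⟨⟨p1, p2⟩, ⟨n1, k1⟩, ⟨n2, k2⟩⟩ hx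
      simp only [Finset.mem_sigma, Finset.mem_product, Finset.HasAntidiagonal.mem_antidiagonal] at hx
      obtain ⟨h1, h2, h3⟩ := hx
      subst h2; subst h3; rfl
    · rintro ⟨⟨p1, p2⟩, ⟨n1, k1⟩, ⟨n2, k2⟩⟩ _
      rfl
  rw [step1, step2, Finset.sum_sigma]
  apply Finset.sum_congr rfl
  rintro ⟨N, K⟩ _
  rw [Finset.sum_product]
  have inner : ∀ n ∈ Finset.HasAntidiagonal.antidiagonal N,
      (∑ k ∈ Finset.HasAntidiagonal.antidiagonal K, gg n.1 k.1 * gg n.2 k.2)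
        = gbinom (1/2) n.1 * gbinom (1/2) n.2 * ((N.choose K : ℝ) * (1/36:ℝ)^K) := by
    rintro ⟨n1, n2⟩ hn
    have hn' : n1 + n2 = N := Finset.HasAntidiagonal.mem_antidiagonal.mp hn
    have hterm : ∀ k ∈ Finset.HasAntidiagonal.antidiagonal K, gg n1 k.1 * gg n2 k.2
        = gbinom (1/2) n1 * gbinom (1/2) n2 * (1/36:ℝ)^K
            * ((n1.choose k.1 * n2.choose k.2 : ℕ) : ℝ) := by
      rintro ⟨k1, k2⟩ hk
      have hk' : k1 + k2 = K := Finset.HasAntidiagonal.mem_antidiagonal.mp hk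
      simp only [gg]
      push_cast
      rw [← hk', pow_add]
      ring
    rw [Finset.sum_congr rfl hterm, ← Finset.mul_sum, ← Nat.cast_sum]
    have hch : ∑ k ∈ Finset.HasAntidiagonal.antidiagonal K, n1.choose k.1 * n2.choose k.2 = N.choose K := by
      rw [← hn', Nat.add_choose_eq]
    rw [hch]
    ring
  calc (∑ n ∈ Finset.HasAntidiagonal.antidiagonal N, ∑ k ∈ Finset.HasAntidiagonal.antidiagonal K, gg n.1 k.1 * gg n.2 k.2)
      = ∑ n ∈ Finset.HasAntidiagonal.antidiagonal N,
          gbinom (1/2) n.1 * gbinom (1/2) n.2 * ((N.choose K : ℝ) * (1/36:ℝ)^K) :=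
        Finset.sum_congr rfl inner
    _ = (Nat.choose 1 N : ℝ) * (N.choose K : ℝ) * (1/36:ℝ)^K := by
        rw [← Finset.sum_mul, aa]
        ring

lemma bb3 (M : ℕ) (hM : 3 ≤ M) :
    ∑ p ∈ Finset.HasAntidiagonal.antidiagonal M, b p.1 * b p.2 = 0 := by
  rw [bb]
  apply Finset.sum_eq_zero
  rintro ⟨N, K⟩ hq
  have hNK : N + K = M := Finset.HasAntidiagonal.mem_antidiagonal.mp hq
  by_cases h : N ≤ 1
  · have hlt : N < K := by omega
    rw [Nat.choose_eq_zero_of_lt hlt]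
    simp
  · rw [Nat.choose_eq_zero_of_lt (show 1 < N by omega)]
    simp

lemma cconv (M : ℕ) (hM : 3 ≤ M) :
    ∑ p ∈ Finset.HasAntidiagonal.antidiagonal M, ((-6:ℝ)^p.1 * b p.1) * ((-6:ℝ)^p.2 * b p.2) = 0 := by
  have h : ∀ p ∈ Finset.HasAntidiagonal.antidiagonal M,
      ((-6:ℝ)^p.1 * b p.1) * ((-6:ℝ)^p.2 * b p.2) = (-6:ℝ)^M * (b p.1 * b p.2) := by
    rintro ⟨i, j⟩ hp
    have hij : i + j = M := Finset.HasAntidiagonal.mem_antidiagonal.mp hp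
    rw [← hij, pow_add]
    ring
  rw [Finset.sum_congr rfl h, ← Finset.mul_sum, bb3 M hM, mul_zero]

lemma hb0 : b 0 = 1 := by
  simp [b, gbinom]

lemma hb1 : b 1 = 1/2 := by
  simp [b, gbinom, Finset.sum_range_succ, Finset.prod_range_succ]

lemma hb2 : b 2 = -(1/9) := by
  simp [b, gbinom, Finset.sum_range_succ, Finset.prod_range_succ]
  norm_num

lemma hs0 : s 0 = 1 := by rw [s]

lemma hs1 : s 1 = 2 := by
  rw [s, Finset.sum_attach (Finset.range 1) (fun i => s i * s (0 - i)),
    Finset.sum_range_one, hs0]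

lemma s_rec (n : ℕ) : s (n + 2)
    = 3 * s (n + 1) + ∑ i ∈ Finset.range n, s (i + 1) * s (n - i) := by
  rw [s, Finset.sum_attach (Finset.range (n+2)) (fun i => s i * s (n + 1 - i)),
    Finset.sum_range_succ, Finset.sum_range_succ']
  simp only [Nat.succ_sub_succ, Nat.sub_zero, Nat.sub_self, hs0]
  ring

lemma key : ∀ m : ℕ, 1 ≤ m → (s m : ℝ) = -((-6:ℝ)^(m+1) * b (m+1)) / 2 := by
  intro m
  induction m using Nat.strong_induction_on with
  | _ m ih =>
    match m, ih with
    | 0, _ => intro h; exact absurd h (by omega)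
    | 1, _ =>
      intro _
      rw [hs1, hb2]
      norm_num
    | (n+2), ih =>
      intro _
      have hIH1 : (-6:ℝ)^(n+2) * b (n+2) = -2 * (s (n+1) : ℝ) := by
        have := ih (n+1) (by omega) (by omega)
        linarith
      have hc := cconv (n+3) (by omega)
      rw [Finset.Nat.sum_antidiagonal_eq_sum_range_succ_mk] at hc
      rw [Finset.sum_range_succ, Finset.sum_range_succ, Finset.sum_range_succ',
        Finset.sum_range_succ'] at hc
      have e1 : n + 3 - (n + 2) = 1 := by omega
      have e2 : n + 3 - (n + 3) = 0 := by omega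
      have e3 : ∀ k : ℕ, n + 3 - (k + 1 + 1) = n + 1 - k := fun k => by omega
      have e4 : n + 3 - 1 = n + 2 := by omega
      dsimp only at hc
      simp only [e1, e2, e3, e4, zero_add, Nat.sub_zero, hb0, hb1, pow_zero, pow_one,
        one_mul, mul_one] at hc
      have hsum : ∑ x ∈ Finset.range n,
          (-6:ℝ)^(x+1+1) * b (x+1+1) * ((-6:ℝ)^(n+1-x) * b (n+1-x))
          = 4 * ∑ x ∈ Finset.range n, (s (x+1) : ℝ) * (s (n-x) : ℝ) := by
        rw [Finset.mul_sum]
        apply Finset.sum_congr rfl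
        intro x hx
        have hx' : x < n := Finset.mem_range.mp hx
        have h5 : n + 1 - x = (n - x) + 1 := by omega
        have hA : (-6:ℝ)^(x+1+1) * b (x+1+1) = -2 * (s (x+1) : ℝ) := by
          have := ih (x+1) (by omega) (by omega)
          linarith
        have hB : (-6:ℝ)^((n-x)+1) * b ((n-x)+1) = -2 * (s (n-x) : ℝ) := by
          have := ih (n-x) (by omega) (by omega)
          linarith
        rw [h5, hA, hB]
        ring
      rw [hsum, hIH1] at hc
      have hs2 : (s (n+2) : ℝ) = 3 * (s (n+1) : ℝ)
          + ∑ x ∈ Finset.range n, (s (x+1) : ℝ) * (s (n-x) : ℝ) := by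
        rw [s_rec]
        push_cast
        ring
      rw [hs2]
      linarith [hc]

theorem stmt3 (m : ℕ) (hm : 1 ≤ m) :
    (s m : ℝ) = ((-1 : ℝ) ^ m * 6 ^ (m + 1) / 2) * b (m + 1) := by
  rw [key m hm]
  have h : (-6:ℝ)^(m+1) = -((-1:ℝ)^m * 6^(m+1)) := by
    rw [show (-6:ℝ) = -1 * 6 by norm_num, mul_pow, pow_succ]
    ring
  rw [h]
  ring
end

section
/- For every natural number m ≥ 2, Σ_{k=0}^{m} ((1−m)/2)_k · (−m/2)_k / ( (3/2 − m)_k · k! ) = 0, where all Pochhammer symbols are evaluated in ℝ (note (3/2 − m)_k ≠ 0 for all k, m ∈ ℕ). -/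
open Polynomial

private lemma poch_succ_eval (x : ℝ) (k : ℕ) :
    eval x (ascPochhammer ℝ (k + 1)) = eval x (ascPochhammer ℝ k) * (x + k) := by
  rw [ascPochhammer_succ_right]
  simp

private lemma half_ne (m k : ℕ) : (3 : ℝ) / 2 - m + k ≠ 0 := by
  intro h
  have h2 : ((2 * m : ℕ) : ℝ) = ((2 * k + 3 : ℕ) : ℝ) := by push_cast; linarith
  have h3 : 2 * m = 2 * k + 3 := Nat.cast_inj.mp h2
  omega

private lemma poch_c_ne (m : ℕ) : ∀ k, eval ((3 : ℝ) / 2 - m) (ascPochhammer ℝ k) ≠ 0 := by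
  intro k
  induction k with
  | zero => simp
  | succ n ih =>
      rw [poch_succ_eval]
      exact mul_ne_zero ih (half_ne m n)

private lemma poch_neg_eval (j : ℕ) : ∀ k, j < k → eval (-(j : ℝ)) (ascPochhammer ℝ k) = 0 := by
  intro k
  induction k with
  | zero => omega
  | succ n ih =>
      intro h
      rw [poch_succ_eval]
      rcases Nat.lt_or_ge j n with h' | h'
      · rw [ih h', zero_mul]
      · have : j = n := by omega
        subst this
        simp

private noncomputable def tt (m k : ℕ) : ℝ :=
  Polynomial.eval ((1 - (m : ℝ)) / 2) (ascPochhammer ℝ k) *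
    Polynomial.eval (-(m : ℝ) / 2) (ascPochhammer ℝ k) /
    (Polynomial.eval (3 / 2 - (m : ℝ)) (ascPochhammer ℝ k) * (k.factorial : ℝ))

set_option maxHeartbeats 1000000 in
private lemma key_s16 (m : ℕ) (hm : 2 ≤ m) : ∀ j : ℕ,
    ∑ k ∈ Finset.range (j + 1), tt m k =
      tt m j * ((2 * (j : ℝ) - m) * (2 * (j : ℝ) - m + 1)) / ((m : ℝ) * ((m : ℝ) - 1)) := by
  have hm0 : (m : ℝ) ≠ 0 := by
    have : (0 : ℝ) < m := by exact_mod_cast Nat.lt_of_lt_of_le (by norm_num) hm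
    linarith
  have hm1 : (m : ℝ) - 1 ≠ 0 := by
    have : (2 : ℝ) ≤ m := by exact_mod_cast hm
    linarith
  intro j
  induction j with
  | zero =>
      simp only [zero_add, Finset.sum_range_one, tt]
      simp only [ascPochhammer_zero, Polynomial.eval_one, Nat.factorial_zero, Nat.cast_zero]
      field_simp
      ring
  | succ n ih =>
      have hc := poch_c_ne m n
      have hcn := half_ne m n
      have hf : (n.factorial : ℝ) ≠ 0 := by exact_mod_cast n.factorial_ne_zero
      have hn1 : ((n : ℝ) + 1) ≠ 0 := by positivity
      have hstep : tt m (n + 1) =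
          tt m n * (((1 - (m : ℝ)) / 2 + n) * (-(m : ℝ) / 2 + n)) /
            ((3 / 2 - (m : ℝ) + n) * ((n : ℝ) + 1)) := by
        simp only [tt, poch_succ_eval, Nat.factorial_succ, Nat.cast_mul, Nat.cast_add,
          Nat.cast_one]
        field_simp
      rw [Finset.sum_range_succ, ih, hstep]
      generalize tt m n = T
      push_cast
      have hD : (m : ℝ) * ((m : ℝ) - 1) ≠ 0 := mul_ne_zero hm0 hm1
      have hQ : ((3 : ℝ) / 2 - m + n) * ((n : ℝ) + 1) ≠ 0 := mul_ne_zero hcn hn1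
      rw [div_mul_eq_mul_div, div_div, div_add_div _ _ hD hQ,
        div_eq_div_iff (mul_ne_zero hD hQ) (mul_ne_zero hQ hD)]
      ring

theorem stmt16 (m : ℕ) (hm : 2 ≤ m) :
    ∑ k ∈ Finset.range (m + 1),
      Polynomial.eval ((1 - (m : ℝ)) / 2) (ascPochhammer ℝ k) *
        Polynomial.eval (-(m : ℝ) / 2) (ascPochhammer ℝ k) /
        (Polynomial.eval (3 / 2 - (m : ℝ)) (ascPochhammer ℝ k) * (k.factorial : ℝ)) =
      0 := by
  have h := key_s16 m hm m
  have htm : tt m m = 0 := by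
    rcases Nat.even_or_odd m with ⟨n, hn⟩ | ⟨n, hn⟩
    · have hb : -(m : ℝ) / 2 = -(n : ℝ) := by
        subst hn; push_cast; ring
      have hz : eval (-(n : ℝ)) (ascPochhammer ℝ m) = 0 :=
        poch_neg_eval n m (by omega)
      simp [tt, hb, hz]
    · have ha : (1 - (m : ℝ)) / 2 = -(n : ℝ) := by
        subst hn; push_cast; ring
      have hz : eval (-(n : ℝ)) (ascPochhammer ℝ m) = 0 :=
        poch_neg_eval n m (by omega)
      simp [tt, ha, hz]
  rw [show (∑ k ∈ Finset.range (m + 1),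
      Polynomial.eval ((1 - (m : ℝ)) / 2) (ascPochhammer ℝ k) *
        Polynomial.eval (-(m : ℝ) / 2) (ascPochhammer ℝ k) /
        (Polynomial.eval (3 / 2 - (m : ℝ)) (ascPochhammer ℝ k) * (k.factorial : ℝ))) =
      ∑ k ∈ Finset.range (m + 1), tt m k from rfl, h, htm]
  simp
end
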